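/- Let A be a unital C*-algebra over ℂ, let s ∈ A be self-adjoint, and let t ∈ A be positive and invertible. Then ‖t^{-1/2} s t^{-1/2}‖ ≤ ‖s t^{-1}‖, where t^{1/2} denotes the positive square root of t obtained from the continuous functional calculus and t^{-1/2} = (t⁻¹)^{1/2}. -/

import Mathlib

/-- **Proposition A.2.(4) (bounded case).** Let `A` be a unital C*-algebra, `s` a self-adjoint
element, and `t` a positive invertible element.  Then
`‖t^{-1/2} * s * t^{-1/2}‖ ≤ ‖s * t⁻¹‖`. -/
theorem norm_sqrt_inv_mul_selfAdjoint_mul_sqrt_inv_le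
    {A : Type*} [CStarAlgebra A] [PartialOrder A] [StarOrderedRing A]
    (s t : A) (hs : IsSelfAdjoint s) (ht : 0 ≤ t) (htu : IsUnit t) :
    ‖CFC.sqrt (Ring.inverse t) * s * CFC.sqrt (Ring.inverse t)‖ ≤ ‖s * Ring.inverse t‖ := by
  obtain hA | hA := subsingleton_or_nontrivial A
  · rw [Subsingleton.elim (CFC.sqrt (Ring.inverse t) * s * CFC.sqrt (Ring.inverse t))
      (s * Ring.inverse t)]
  set u := CFC.sqrt (Ring.inverse t) with hu_def
  have hinv : (0 : A) ≤ Ring.inverse t := by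
    rw [← htu.unit_spec, Ring.inverse_unit]
    exact CFC.inv_nonneg_of_nonneg _ (by simpa [htu.unit_spec] using ht)
  have hu0 : (0 : A) ≤ u := CFC.sqrt_nonneg _
  have huu : u * u = Ring.inverse t := CFC.sqrt_mul_sqrt_self _ hinv
  have h1 : u * (u * t) = 1 := by rw [← mul_assoc, huu, Ring.inverse_mul_cancel _ htu]
  have h2 : (t * u) * u = 1 := by rw [mul_assoc, huu, Ring.mul_inverse_cancel _ htu]
  have hcomm : t * u = u * t := by
    calc t * u = (t * u) * (u * (u * t)) := by rw [h1, mul_one]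
    _ = ((t * u) * u) * (u * t) := by simp only [mul_assoc]
    _ = u * t := by rw [h2, one_mul]
  have h3 : (u * t) * u = 1 := by rw [← hcomm]; exact h2
  set U : Aˣ := ⟨u, u * t, h1, h3⟩ with hU
  have key : (U : A) * (s * Ring.inverse t) * ↑U⁻¹ = u * s * u := by
    show u * (s * Ring.inverse t) * (u * t) = u * s * u
    rw [← huu]
    simp only [mul_assoc]
    rw [h1, mul_one]
  have hsa : IsSelfAdjoint (u * s * u) := by
    have hu := IsSelfAdjoint.of_nonneg hu0
    rw [IsSelfAdjoint, star_mul, star_mul, hu.star_eq, hs.star_eq, mul_assoc]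
  have hmain : (‖u * s * u‖₊ : ENNReal) ≤ (‖s * Ring.inverse t‖₊ : ENNReal) := by
    rw [← hsa.spectralRadius_eq_nnnorm, ← key]
    unfold spectralRadius
    rw [spectrum.units_conjugate]
    exact spectrum.spectralRadius_le_nnnorm (𝕜 := ℂ) _
  rw [ENNReal.coe_le_coe] at hmain
  exact_mod_cast hmain
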